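/- arXiv:1008.0430 — 4 statements merged into one kernel-verified Lean document; each statement's English description precedes it below -/
import Mathlib

section
/- Let p ≡ 1 (mod 4) and let α, β be nonzero relatively prime polynomials in F_p[T]. Then the Jacobi symbol (α/β) equals the product over places v dividing β of the Hilbert symbols (α,β)_v. -/
/- Statement 1: for coprime nonzero α, β ∈ 𝔽_p[T] (p ≡ 1 mod 4), the Jacobi
symbol (α/β) equals the product over the finite places v dividing β of the
local Hilbert symbols (α,β)_v. -/

open Polynomial UniqueFactorizationMonoid IsDedekindDomain

noncomputable section
open scoped Classical BigOperators
set_option synthInstance.maxHeartbeats 1000000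

/-- The Legendre symbol `(d/q)` for `q` irreducible in `𝔽_p[T]`. -/
def legSym (p : ℕ) (d q : Polynomial (ZMod p)) : ℤ :=
  if ¬ IsCoprime q d then 0 else if ∃ e, q ∣ e ^ 2 - d then 1 else -1

/-- The Jacobi symbol `(d/c)` over `𝔽_p[T]`, extended multiplicatively in `c`
from the Legendre symbol at the irreducible factors of `c`. -/
def jacobiP (p : ℕ) [Fact p.Prime] (d c : Polynomial (ZMod p)) : ℤ :=
  ((normalizedFactors c).map (fun q => legSym p d q)).prod

/-- The Hilbert symbol at a finite place `v` of `k = 𝔽_p(T)`: it is `1` iff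
`z² = x·a² + y·b²` has a nontrivial solution in the completion `k_v`, and `-1`
otherwise. -/
def hilbertFin (p : ℕ) [Fact p.Prime]
    (v : HeightOneSpectrum (Polynomial (ZMod p))) (x y : RatFunc (ZMod p)) : ℤ :=
  if ∃ a b c : v.adicCompletion (RatFunc (ZMod p)), ¬(a = 0 ∧ b = 0 ∧ c = 0) ∧
      c ^ 2 = algebraMap (RatFunc (ZMod p)) _ x * a ^ 2
            + algebraMap (RatFunc (ZMod p)) _ y * b ^ 2
  then 1 else -1

open Multiplicative Filter Topology
local notation "ℤₘ₀" => WithZero (Multiplicative ℤ)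
set_option maxHeartbeats 2000000

lemma zm0_lt_one_le {δ : ℤₘ₀} (h : δ < 1) : δ ≤ ((ofAdd (-1 : ℤ) : Multiplicative ℤ) : ℤₘ₀) := by
  rcases eq_or_ne δ 0 with rfl | h0
  · exact zero_le'
  · obtain ⟨m, rfl⟩ := WithZero.ne_zero_iff_exists.mp h0
    rw [← WithZero.coe_one, WithZero.coe_lt_coe] at h
    rw [WithZero.coe_le_coe]
    have : toAdd m < 0 := toAdd_lt.mpr h
    have : toAdd m ≤ -1 := by omega
    simpa [← toAdd_le] using this

lemma zm0_pow_le {δ : ℤₘ₀} (h : δ < 1) (n : ℕ) :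
    δ ^ (n + 1) ≤ ((ofAdd (-(n + 1) : ℤ) : Multiplicative ℤ) : ℤₘ₀) := by
  calc δ ^ (n+1) ≤ ((ofAdd (-1 : ℤ) : Multiplicative ℤ) : ℤₘ₀) ^ (n+1) :=
        pow_le_pow_left₀ zero_le' (zm0_lt_one_le h) _
  _ = ((ofAdd (-(n+1) : ℤ) : Multiplicative ℤ) : ℤₘ₀) := by
        rw [← WithZero.coe_pow, WithZero.coe_inj, ← ofAdd_nsmul]
        norm_num

lemma zm0_exists_N (γ : ℤₘ₀ˣ) : ∃ N : ℕ, ((ofAdd (-(N + 1) : ℤ) : Multiplicative ℤ) : ℤₘ₀) < γ := by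
  have h0 : (γ : ℤₘ₀) ≠ 0 := γ.ne_zero
  obtain ⟨m, hm⟩ := WithZero.ne_zero_iff_exists.mp h0
  refine ⟨(-(toAdd m)).toNat, ?_⟩
  rw [← hm, WithZero.coe_lt_coe, ← toAdd_lt]
  have := Int.self_le_toNat (-(toAdd m))
  simp only [toAdd_ofAdd]
  omega

lemma zm0_pow_lt {δ : ℤₘ₀} (h : δ < 1) (γ : ℤₘ₀ˣ) : ∃ N : ℕ, ∀ n ≥ N, δ ^ (n + 1) < γ := by
  obtain ⟨N, hN⟩ := zm0_exists_N γ
  refine ⟨N, fun n hn => lt_of_le_of_lt ?_ hN⟩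
  calc δ ^ (n+1) ≤ ((ofAdd (-(n+1) : ℤ) : Multiplicative ℤ) : ℤₘ₀) := zm0_pow_le h n
  _ ≤ ((ofAdd (-(N+1) : ℤ) : Multiplicative ℤ) : ℤₘ₀) := by
      rw [WithZero.coe_le_coe, ← toAdd_le]; simp; omega

/-- Newton iteration square roots in a complete nonarchimedean valued field. -/
theorem sqrt_exists {L : Type*} [Field L] [Valued L ℤₘ₀] [CompleteSpace L]
    (h2 : Valued.v (2 : L) = 1) {w c₀ : L} (hc : Valued.v c₀ = 1)
    (hw : Valued.v (c₀ ^ 2 - w) < 1) : ∃ c : L, c ^ 2 = w := by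
  set V : Valuation L ℤₘ₀ := Valued.v with hV
  set δ : ℤₘ₀ := V (c₀ ^ 2 - w) with hδdef
  have hδ : δ < 1 := hw
  have hδ1 : δ ≤ 1 := le_of_lt hδ
  -- the Newton sequence
  let x : ℕ → L := fun n => Nat.recAux c₀ (fun _ b => (b + w / b) / 2) n
  have hx0 : x 0 = c₀ := rfl
  have hxs : ∀ n, x (n + 1) = (x n + w / x n) / 2 := fun n => rfl
  have h2ne : (2 : L) ≠ 0 := by
    intro h; rw [h] at h2; simp [hV] at h2
  -- main invariant
  have inv : ∀ n, V (x n) = 1 ∧ V (x n ^ 2 - w) ≤ δ ^ (n + 1) := by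
    intro n
    induction n with
    | zero => exact ⟨hc, by rw [hx0, pow_one]⟩
    | succ n ih =>
      obtain ⟨h1, hb⟩ := ih
      have hxne : x n ≠ 0 := fun h => by rw [h] at h1; simp [hV] at h1
      have idA : x (n + 1) - x n = (w - x n ^ 2) / (2 * x n) := by
        rw [hxs]; field_simp; try ring
      have idB : x (n + 1) ^ 2 - w = (x n ^ 2 - w) ^ 2 / (2 * x n) ^ 2 := by
        rw [hxs]; field_simp; try ring
      have hV2x : V (2 * x n) = 1 := by rw [V.map_mul, h2, h1, mul_one]
      have hlt1 : δ ^ (n + 1) < 1 := pow_lt_one₀ zero_le' hδ (Nat.succ_ne_zero n)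
      have hdiff : V (x (n + 1) - x n) ≤ δ ^ (n + 1) := by
        rw [idA, V.map_div, hV2x, div_one, V.map_sub_swap]; exact hb
      have hxn1 : V (x (n + 1)) = 1 := by
        have : x (n + 1) = (x (n + 1) - x n) + x n := by ring
        rw [this, V.map_add_eq_of_lt_right (by rw [h1]; exact lt_of_le_of_lt hdiff hlt1), h1]
      refine ⟨hxn1, ?_⟩
      rw [idB, V.map_div, V.map_pow, V.map_pow, hV2x, one_pow, div_one]
      calc V (x n ^ 2 - w) ^ 2 ≤ (δ ^ (n + 1)) ^ 2 := pow_le_pow_left₀ zero_le' hb 2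
      _ = δ ^ ((n + 1) * 2) := (pow_mul δ (n + 1) 2).symm
      _ ≤ δ ^ (n + 2) := pow_le_pow_right_of_le_one' hδ1 (by omega)
  -- telescoping bound
  have htel : ∀ n m, n ≤ m → V (x m - x n) ≤ δ ^ (n + 1) := by
    intro n m hnm
    induction m, hnm using Nat.le_induction with
    | base => simp
    | succ m hnm ih =>
      have : x (m + 1) - x n = (x (m + 1) - x m) + (x m - x n) := by ring
      rw [this]
      refine le_trans (V.map_add _ _) (max_le ?_ ih)
      have hdiff : V (x (m + 1) - x m) ≤ δ ^ (m + 1) := by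
        have hxne : x m ≠ 0 := fun h => by
          have := (inv m).1; rw [h] at this; simp [hV] at this
        have idA : x (m + 1) - x m = (w - x m ^ 2) / (2 * x m) := by
          rw [hxs]; field_simp; try ring
        rw [idA, V.map_div, V.map_mul, h2, (inv m).1, mul_one, div_one, V.map_sub_swap]
        exact (inv m).2
      exact le_trans hdiff (pow_le_pow_right_of_le_one' hδ1 (by omega))
  -- Cauchy
  have hcauchy : CauchySeq x := by
    rw [(Valued.hasBasis_uniformity L ℤₘ₀).cauchySeq_iff]
    intro γ _
    obtain ⟨N, hN⟩ := zm0_pow_lt hδ (Units.map (MonoidWithZeroHom.ValueGroup₀.embedding (f := (.ofClass V))) γ)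
    refine ⟨N, fun m hm n hn => ?_⟩
    show V.restrict (x n - x m) < γ.1
    rw [Valuation.restrict_lt_iff_lt_embedding]
    have : x n - x m = (x n - x N) - (x m - x N) := by ring
    rw [this]
    refine lt_of_le_of_lt (le_trans (V.map_sub _ _) (max_le (htel _ _ hn) (htel _ _ hm))) ?_
    exact hN N le_rfl
  obtain ⟨c, hlim⟩ := cauchySeq_tendsto_of_complete hcauchy
  refine ⟨c, ?_⟩
  -- show c^2 = w
  have key : ∀ γ : (MonoidWithZeroHom.ValueGroup₀ (.ofClass V))ˣ, V.restrict (c ^ 2 - w) < γ := by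
    intro γ
    have hsq : Tendsto (fun n => x n ^ 2) atTop (𝓝 (c ^ 2)) :=
      ((continuous_pow 2).tendsto c).comp hlim
    have hball : {y : L | V.restrict (y - c ^ 2) < γ} ∈ 𝓝 (c ^ 2) :=
      Valued.mem_nhds.mpr ⟨γ, subset_rfl⟩
    have hev1 : ∀ᶠ n in atTop, V.restrict (x n ^ 2 - c ^ 2) < γ := hsq.eventually_mem hball
    obtain ⟨N, hN⟩ := zm0_pow_lt hδ (Units.map (MonoidWithZeroHom.ValueGroup₀.embedding (f := (.ofClass V))) γ)
    obtain ⟨n, hn1, hn2⟩ := (hev1.and (eventually_ge_atTop N)).exists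
    have hb2 : V.restrict (x n ^ 2 - w) < γ :=
      (V.restrict_lt_iff_lt_embedding).mpr (lt_of_le_of_lt ((inv n).2) (hN n hn2))
    have : c ^ 2 - w = -(x n ^ 2 - c ^ 2) + (x n ^ 2 - w) := by ring
    rw [this]
    exact lt_of_le_of_lt (V.restrict.map_add _ _) (max_lt (by rwa [V.restrict.map_neg]) hb2)
  by_contra hne
  have h0 : V.restrict (c ^ 2 - w) ≠ 0 := fun h => hne (sub_eq_zero.mp (V.restrict.zero_iff.mp h))
  exact lt_irrefl _ (key (Units.mk0 _ h0))

section Places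

variable {p : ℕ} [Fact p.Prime]

def placeOf {q : Polynomial (ZMod p)} (hq : Irreducible q) :
    HeightOneSpectrum (Polynomial (ZMod p)) :=
  ⟨Ideal.span {q}, (Ideal.span_singleton_prime hq.ne_zero).mpr hq.prime,
    by simpa [Ne, Ideal.span_singleton_eq_bot] using hq.ne_zero⟩

def placeD (q : Polynomial (ZMod p)) : HeightOneSpectrum (Polynomial (ZMod p)) :=
  if h : Irreducible q then placeOf h else placeOf (Polynomial.irreducible_X)

lemma placeD_eq {q : Polynomial (ZMod p)} (hq : Irreducible q) : placeD q = placeOf hq :=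
  dif_pos hq

variable {q : Polynomial (ZMod p)} (hq : Irreducible q)

lemma intVal_lt_one_iff (r : Polynomial (ZMod p)) :
    (placeOf hq).intValuation r < 1 ↔ q ∣ r := by
  rw [HeightOneSpectrum.intValuation_lt_one_iff_dvd]
  exact span_singleton_dvd_span_singleton_iff_dvd

lemma intVal_eq_one {r : Polynomial (ZMod p)} (h : ¬ q ∣ r) :
    (placeOf hq).intValuation r = 1 := by
  rcases lt_or_eq_of_le ((placeOf hq).intValuation_le_one r) with hlt | heq
  · exact absurd ((intVal_lt_one_iff hq r).mp hlt) h
  · exact heq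

lemma intVal_le_pow_iff (r : Polynomial (ZMod p)) (n : ℕ) :
    (placeOf hq).intValuation r ≤ ((Multiplicative.ofAdd (-(n : ℤ)) : Multiplicative ℤ) : ℤₘ₀)
      ↔ q ^ n ∣ r := by
  show (placeOf hq).intValuation r ≤ WithZero.exp (-(n : ℤ)) ↔ q ^ n ∣ r
  rw [HeightOneSpectrum.intValuation_le_pow_iff_dvd]
  show Ideal.span {q} ^ n ∣ _ ↔ _
  rw [Ideal.span_singleton_pow]
  exact span_singleton_dvd_span_singleton_iff_dvd

lemma intVal_eq_ofAdd {β : Polynomial (ZMod p)} {e : ℕ} (hβ : β ≠ 0)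
    (h1 : q ^ e ∣ β) (h2 : ¬ q ^ (e + 1) ∣ β) :
    (placeOf hq).intValuation β = ((Multiplicative.ofAdd (-(e : ℤ)) : Multiplicative ℤ) : ℤₘ₀) := by
  have hle : (placeOf hq).intValuation β ≤ _ := (intVal_le_pow_iff hq β e).mpr h1
  have hnle : ¬ (placeOf hq).intValuation β ≤
      ((Multiplicative.ofAdd (-((e + 1 : ℕ) : ℤ)) : Multiplicative ℤ) : ℤₘ₀) := by
    intro h
    exact h2 ((intVal_le_pow_iff hq β (e + 1)).mp h)
  have h0 : (placeOf hq).intValuation β ≠ 0 := by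
    exact HeightOneSpectrum.intValuation_ne_zero _ _ hβ
  obtain ⟨m, hm⟩ := WithZero.ne_zero_iff_exists.mp h0
  rw [← hm] at hle hnle ⊢
  rw [WithZero.coe_le_coe, ← Multiplicative.toAdd_le, toAdd_ofAdd] at hle
  rw [WithZero.coe_le_coe, ← Multiplicative.toAdd_le, toAdd_ofAdd] at hnle
  rw [WithZero.coe_inj]
  have he : Multiplicative.toAdd m = -(e : ℤ) := by push_cast at hnle; omega
  rw [← he]; simp

end Places

section Completion

variable {p : ℕ} [Fact p.Prime] (v : HeightOneSpectrum (Polynomial (ZMod p)))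

local notation "K" => RatFunc (ZMod p)
local notation "L" => HeightOneSpectrum.adicCompletion (RatFunc (ZMod p)) v

lemma VK (s : RatFunc (ZMod p)) :
    Valued.v ((algebraMap (RatFunc (ZMod p)) L) s) = v.valuation (RatFunc (ZMod p)) s := by
  rw [HeightOneSpectrum.algebraMap_adicCompletion]
  exact v.valuedAdicCompletion_eq_valuation' s

lemma VL (r : Polynomial (ZMod p)) :
    Valued.v ((algebraMap (RatFunc (ZMod p)) L) (algebraMap (Polynomial (ZMod p)) (RatFunc (ZMod p)) r))
      = v.intValuation r := by
  rw [VK, HeightOneSpectrum.valuation_of_algebraMap]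

lemma dense_approx (x : L) (γ : ℤₘ₀ˣ) :
    ∃ s : RatFunc (ZMod p), Valued.v (x - algebraMap (RatFunc (ZMod p)) L s) < γ := by
  have hd := HeightOneSpectrum.denseRange_algebraMap (RatFunc (ZMod p)) v
  obtain ⟨s0, hs0⟩ := v.valuation_surjective (RatFunc (ZMod p)) (γ : ℤₘ₀)
  have hne : (Valued.v : Valuation L ℤₘ₀).restrict (algebraMap (RatFunc (ZMod p)) L s0) ≠ 0 := by
    intro h
    rw [Valuation.zero_iff, ← Valuation.zero_iff (Valued.v : Valuation L ℤₘ₀), VK, hs0] at h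
    exact γ.ne_zero h
  have hball : {y : L | Valued.v (y - x) < γ} ∈ 𝓝 x := by
    refine Valued.mem_nhds.mpr ⟨Units.mk0 _ hne, fun y hy => ?_⟩
    simp only [Set.mem_setOf_eq, Units.val_mk0, Valuation.restrict_lt_iff] at hy
    rw [VK, hs0] at hy
    exact hy
  obtain ⟨s, hs⟩ := hd.mem_nhds hball
  refine ⟨s, ?_⟩
  rw [Valuation.map_sub_swap]
  exact hs

end Completion

section Arith

variable {p : ℕ} [Fact p.Prime]

lemma zmod_two_ne_zero (hp2 : p % 2 = 1) : (2 : ZMod p) ≠ 0 := by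
  intro h
  have h2 : ((2 : ℕ) : ZMod p) = 0 := by exact_mod_cast h
  have hdvd : p ∣ 2 := (ZMod.natCast_eq_zero_iff 2 p).mp h2
  have := (Nat.prime_dvd_prime_iff_eq (Fact.out : p.Prime) Nat.prime_two).mp hdvd
  omega

lemma not_dvd_two {q : Polynomial (ZMod p)} (hp2 : p % 2 = 1) (hq : Irreducible q) :
    ¬ q ∣ (2 : Polynomial (ZMod p)) := by
  intro h
  have hC : (Polynomial.C (2 : ZMod p)) = (2 : Polynomial (ZMod p)) := map_ofNat _ 2
  have hu : IsUnit (2 : Polynomial (ZMod p)) := by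
    rw [← hC]; exact Polynomial.isUnit_C.mpr (zmod_two_ne_zero hp2).isUnit
  exact hq.not_isUnit (isUnit_of_dvd_unit h hu)

variable {q α : Polynomial (ZMod p)}

lemma approx_square (hq : Irreducible q) (s : RatFunc (ZMod p))
    (h1 : (placeOf hq).valuation (RatFunc (ZMod p)) s ≤ 1)
    (h2 : (placeOf hq).valuation (RatFunc (ZMod p))
        (s ^ 2 - algebraMap (Polynomial (ZMod p)) (RatFunc (ZMod p)) α) < 1) :
    ∃ e : Polynomial (ZMod p), q ∣ e ^ 2 - α := by
  set v := placeOf hq with hv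
  set n := s.num with hn
  set d := s.denom with hd
  have hd0 : d ≠ 0 := s.denom_ne_zero
  have hsnd : s = algebraMap _ (RatFunc (ZMod p)) n / algebraMap _ _ d :=
    (RatFunc.num_div_denom s).symm
  have hvs : v.valuation (RatFunc (ZMod p)) s = v.intValuation n / v.intValuation d := by
    rw [hsnd, Valuation.map_div, HeightOneSpectrum.valuation_of_algebraMap,
      HeightOneSpectrum.valuation_of_algebraMap]
  -- q does not divide the denominator
  have hqd : ¬ q ∣ d := by
    intro hqd
    have hqn : ¬ q ∣ n := fun h => hq.not_isUnit (s.isCoprime_num_denom.isUnit_of_dvd' h hqd)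
    have hivn : v.intValuation n = 1 := intVal_eq_one hq hqn
    have hivd : v.intValuation d < 1 := (intVal_lt_one_iff hq d).mpr hqd
    have hivd0 : (0 : ℤₘ₀) < v.intValuation d := by
      rcases eq_or_ne (v.intValuation d) 0 with h | h
      · exfalso
        exact HeightOneSpectrum.intValuation_ne_zero _ _ hd0 h
      · exact lt_of_le_of_ne zero_le' (Ne.symm h)
    rw [hvs, hivn, div_le_one₀ hivd0] at h1
    exact absurd (lt_of_le_of_lt h1 hivd) (lt_irrefl _)
  have hivd : v.intValuation d = 1 := intVal_eq_one hq hqd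
  -- the identity s^2 - α = (n^2 - α d^2)/d^2
  have hda : algebraMap (Polynomial (ZMod p)) (RatFunc (ZMod p)) d ≠ 0 := by
    intro h
    exact hd0 (IsFractionRing.injective (Polynomial (ZMod p)) (RatFunc (ZMod p)) (by simpa using h))
  have hid : s ^ 2 - algebraMap (Polynomial (ZMod p)) (RatFunc (ZMod p)) α =
      algebraMap _ _ (n ^ 2 - α * d ^ 2) / algebraMap _ (RatFunc (ZMod p)) (d ^ 2) := by
    rw [hsnd]
    field_simp
    simp only [map_sub, map_mul, map_pow, map_add, map_neg]
    ring
  have hval2 : v.intValuation (n ^ 2 - α * d ^ 2) < 1 := by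
    rw [hid, Valuation.map_div, HeightOneSpectrum.valuation_of_algebraMap,
      HeightOneSpectrum.valuation_of_algebraMap, map_pow, hivd, one_pow, div_one] at h2
    exact h2
  have hdvd : q ∣ n ^ 2 - α * d ^ 2 := (intVal_lt_one_iff hq _).mp hval2
  -- invert d mod q
  have hcqd : IsCoprime q d := (hq.coprime_iff_not_dvd).mpr hqd
  obtain ⟨u, w, huv⟩ := hcqd
  have h3 : q ∣ w * d - 1 := ⟨-u, by linear_combination huv⟩
  refine ⟨n * w, ?_⟩
  have key : (n * w) ^ 2 - α =
      w ^ 2 * (n ^ 2 - α * d ^ 2) + α * ((w * d - 1) * (w * d + 1)) := by ring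
  rw [key]
  exact dvd_add (hdvd.mul_left _) ((h3.mul_right _).mul_left _)

lemma exists_rep (hp2 : p % 2 = 1) (hq : Irreducible q) (hα' : ¬ q ∣ α)
    (γ : Polynomial (ZMod p)) :
    ∃ c a : Polynomial (ZMod p), q ∣ c ^ 2 - α * a ^ 2 - γ := by
  haveI := Fact.mk hq
  haveI : Module.Finite (ZMod p) (AdjoinRoot q) := (AdjoinRoot.powerBasis hq.ne_zero).finite
  haveI : Finite (AdjoinRoot q) := Module.finite_of_finite (ZMod p)
  haveI : Fintype (AdjoinRoot q) := Fintype.ofFinite _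
  have hcard : Fintype.card (AdjoinRoot q) % 2 = 1 := by
    have hb := Module.card_fintype (AdjoinRoot.powerBasis hq.ne_zero).basis
    rw [ZMod.card, Fintype.card_fin] at hb
    rw [hb]
    exact Nat.odd_iff.mp ((Nat.odd_iff.mpr hp2).pow)
  have hαbar : AdjoinRoot.mk q α ≠ 0 := fun h => hα' (AdjoinRoot.mk_eq_zero.mp h)
  have hf : (Polynomial.X ^ 2 - Polynomial.C (AdjoinRoot.mk q γ)).degree = 2 :=
    Polynomial.degree_X_pow_sub_C (by norm_num) _
  have hg : (Polynomial.C (-(AdjoinRoot.mk q α)) * Polynomial.X ^ 2).degree = 2 := by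
    rw [Polynomial.degree_C_mul_X_pow _ (neg_ne_zero.mpr hαbar)]; norm_cast
  obtain ⟨a, b, hab⟩ := FiniteField.exists_root_sum_quadratic hf hg hcard
  simp only [Polynomial.eval_add, Polynomial.eval_sub, Polynomial.eval_mul, Polynomial.eval_pow,
    Polynomial.eval_X, Polynomial.eval_C] at hab
  obtain ⟨ca, rfl⟩ := AdjoinRoot.mk_surjective a
  obtain ⟨ab, rfl⟩ := AdjoinRoot.mk_surjective b
  refine ⟨ca, ab, ?_⟩
  rw [← AdjoinRoot.mk_eq_zero]
  simp only [map_sub, map_mul, map_pow]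
  linear_combination hab

end Arith

section ZM0

lemma zm0_cases {a : ℤₘ₀} (h : a ≠ 0) :
    ∃ k : ℤ, a = ((Multiplicative.ofAdd k : Multiplicative ℤ) : ℤₘ₀) := by
  obtain ⟨m, hm⟩ := WithZero.ne_zero_iff_exists.mp h
  exact ⟨Multiplicative.toAdd m, by rw [← hm, ofAdd_toAdd]⟩

lemma zm0_coe_sq (k : ℤ) :
    (((Multiplicative.ofAdd k : Multiplicative ℤ)) : ℤₘ₀) ^ 2
      = ((Multiplicative.ofAdd (2 * k) : Multiplicative ℤ) : ℤₘ₀) := by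
  rw [← WithZero.coe_pow, WithZero.coe_inj, ← ofAdd_nsmul]
  norm_num

lemma zm0_sq_inj {a b : ℤₘ₀} (h : a ^ 2 = b ^ 2) : a = b := by
  rcases eq_or_ne a 0 with rfl | ha
  · have : b ^ 2 = 0 := by rw [← h]; simp
    exact (pow_eq_zero_iff two_ne_zero).mp this |>.symm
  · rcases eq_or_ne b 0 with rfl | hb
    · exact absurd ((pow_eq_zero_iff two_ne_zero).mp (by rw [h]; simp)) ha
    · obtain ⟨k, rfl⟩ := zm0_cases ha
      obtain ⟨l, rfl⟩ := zm0_cases hb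
      rw [zm0_coe_sq, zm0_coe_sq, WithZero.coe_inj, ← ofAdd_toAdd (Multiplicative.ofAdd (2*k)),
        ← ofAdd_toAdd (Multiplicative.ofAdd (2*l))] at h
      simp only [toAdd_ofAdd] at h
      have : k = l := by
        have := Multiplicative.ofAdd.injective h
        omega
      rw [this]

lemma zm0_sq_eq_one {a : ℤₘ₀} (h : a ^ 2 = 1) : a = 1 :=
  zm0_sq_inj (by rw [h, one_pow])

end ZM0

section NoRoot

variable {p : ℕ} [Fact p.Prime] {q α : Polynomial (ZMod p)}

local notation "K" => RatFunc (ZMod p)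

lemma no_approx_root (hq : Irreducible q)
    (hnsq : ¬∃ e : Polynomial (ZMod p), q ∣ e ^ 2 - α)
    (t : (placeOf hq).adicCompletion K) (ht : Valued.v t = 1)
    (h : Valued.v (t ^ 2 - algebraMap K ((placeOf hq).adicCompletion K)
        (algebraMap (Polynomial (ZMod p)) K α)) < 1) : False := by
  set aL := algebraMap K ((placeOf hq).adicCompletion K) (algebraMap (Polynomial (ZMod p)) K α) with haL
  have hofadd : ((Multiplicative.ofAdd (-1 : ℤ) : Multiplicative ℤ) : ℤₘ₀) ≠ 0 := by simp
  obtain ⟨s, hs⟩ := dense_approx (placeOf hq) t (Units.mk0 _ hofadd)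
  have hm1lt : ((Multiplicative.ofAdd (-1 : ℤ) : Multiplicative ℤ) : ℤₘ₀) < 1 := by
    rw [← WithZero.coe_one, WithZero.coe_lt_coe, ← toAdd_lt]; simp
  have hs1 : Valued.v (t - algebraMap K ((placeOf hq).adicCompletion K) s) < 1 := lt_trans hs hm1lt
  set sL := algebraMap K ((placeOf hq).adicCompletion K) s with hsL
  have hVs : Valued.v sL = 1 := by
    have : sL = -(t - sL) + t := by ring
    rw [this, Valuation.map_add_eq_of_lt_right _ (by rw [Valuation.map_neg, ht]; exact hs1), ht]
  have hsum : Valued.v (sL + t) ≤ 1 :=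
    le_trans (Valuation.map_add _ _ _) (max_le (le_of_eq hVs) (le_of_eq ht))
  have key : Valued.v (sL ^ 2 - aL) < 1 := by
    have hid : sL ^ 2 - aL = (sL - t) * (sL + t) + (t ^ 2 - aL) := by ring
    rw [hid]
    refine lt_of_le_of_lt (Valuation.map_add _ _ _) (max_lt ?_ h)
    calc Valued.v ((sL - t) * (sL + t)) = Valued.v (sL - t) * Valued.v (sL + t) :=
          Valuation.map_mul _ _ _
    _ ≤ Valued.v (sL - t) * 1 := mul_le_mul_right hsum _
    _ = Valued.v (t - sL) := by rw [mul_one, Valuation.map_sub_swap]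
    _ < 1 := hs1
  -- transfer to K
  have hback : sL ^ 2 - aL =
      algebraMap K ((placeOf hq).adicCompletion K) (s ^ 2 - algebraMap (Polynomial (ZMod p)) K α) := by
    rw [map_sub, map_pow]
  rw [hback, VK] at key
  have hVsK : (placeOf hq).valuation (RatFunc (ZMod p)) s ≤ 1 := by
    rw [← VK (placeOf hq) s]; exact le_of_eq hVs
  exact hnsq (approx_square hq s hVsK key)

lemma no_root (hq : Irreducible q) (hqα : ¬ q ∣ α)
    (hnsq : ¬∃ e : Polynomial (ZMod p), q ∣ e ^ 2 - α)
    (t : (placeOf hq).adicCompletion K) :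
    t ^ 2 ≠ algebraMap K ((placeOf hq).adicCompletion K)
      (algebraMap (Polynomial (ZMod p)) K α) := by
  intro h
  have hVα : Valued.v (algebraMap K ((placeOf hq).adicCompletion K)
      (algebraMap (Polynomial (ZMod p)) K α)) = 1 := by
    rw [VL]; exact intVal_eq_one hq hqα
  have ht2 : Valued.v t ^ 2 = 1 := by rw [← Valuation.map_pow, h, hVα]
  have ht : Valued.v t = 1 := zm0_sq_eq_one ht2
  exact no_approx_root hq hnsq t ht (by rw [h, sub_self]; simpa using zero_lt_one)

lemma parity_lemma (hq : Irreducible q) (hqα : ¬ q ∣ α)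
    (hnsq : ¬∃ e : Polynomial (ZMod p), q ∣ e ^ 2 - α)
    (c a : (placeOf hq).adicCompletion K) (h : ¬(c = 0 ∧ a = 0)) :
    ∃ k : ℤ, Valued.v (c ^ 2 - algebraMap K ((placeOf hq).adicCompletion K)
        (algebraMap (Polynomial (ZMod p)) K α) * a ^ 2)
      = ((Multiplicative.ofAdd (2 * k) : Multiplicative ℤ) : ℤₘ₀) := by
  set aL := algebraMap K ((placeOf hq).adicCompletion K) (algebraMap (Polynomial (ZMod p)) K α) with haL
  have hVα : Valued.v aL = 1 := by rw [haL, VL]; exact intVal_eq_one hq hqα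
  rcases eq_or_ne a 0 with rfl | ha
  · have hc : c ≠ 0 := fun hc => h ⟨hc, rfl⟩
    have hVc : Valued.v c ≠ 0 := fun h0 => hc ((Valuation.zero_iff _).mp h0)
    obtain ⟨k, hk⟩ := zm0_cases hVc
    refine ⟨k, ?_⟩
    rw [show c ^ 2 - aL * 0 ^ 2 = c ^ 2 by ring, Valuation.map_pow, hk, zm0_coe_sq]
  · rcases eq_or_ne c 0 with rfl | hc
    · have hVa : Valued.v a ≠ 0 := fun h0 => ha ((Valuation.zero_iff _).mp h0)
      obtain ⟨k, hk⟩ := zm0_cases hVa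
      refine ⟨k, ?_⟩
      rw [show (0:((placeOf hq).adicCompletion K)) ^ 2 - aL * a ^ 2 = -(aL * a ^ 2) by ring,
        Valuation.map_neg, Valuation.map_mul, Valuation.map_pow, hVα, one_mul, hk, zm0_coe_sq]
    · have hVc : Valued.v c ≠ 0 := fun h0 => hc ((Valuation.zero_iff _).mp h0)
      have hVa : Valued.v a ≠ 0 := fun h0 => ha ((Valuation.zero_iff _).mp h0)
      rcases eq_or_ne (Valued.v c) (Valued.v a) with heq | hne
      · -- equal valuations
        have hdiv : c ^ 2 - aL * a ^ 2 = a ^ 2 * ((c / a) ^ 2 - aL) := by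
          field_simp
        have hVt : Valued.v (c / a) = 1 := by
          rw [Valuation.map_div, heq, div_self hVa]
        have ht1 : Valued.v ((c / a) ^ 2 - aL) ≤ 1 := by
          refine le_trans (Valuation.map_sub _ _ _) (max_le ?_ (le_of_eq hVα))
          rw [Valuation.map_pow, hVt, one_pow]
        have ht2 : ¬ Valued.v ((c / a) ^ 2 - aL) < 1 :=
          fun hlt => no_approx_root hq hnsq (c / a) hVt hlt
        have ht : Valued.v ((c / a) ^ 2 - aL) = 1 := le_antisymm ht1 (not_lt.mp ht2)
        obtain ⟨k, hk⟩ := zm0_cases hVa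
        refine ⟨k, ?_⟩
        rw [hdiv, Valuation.map_mul, ht, mul_one, Valuation.map_pow, hk, zm0_coe_sq]
      · -- distinct valuations
        obtain ⟨k, hk⟩ := zm0_cases hVc
        obtain ⟨l, hl⟩ := zm0_cases hVa
        have hsq : Valued.v (c ^ 2) ≠ Valued.v (aL * a ^ 2) := by
          rw [Valuation.map_mul, hVα, one_mul, Valuation.map_pow, Valuation.map_pow]
          exact fun hcon => hne (zm0_sq_inj hcon)
        rcases lt_or_gt_of_ne hsq with hlt | hgt
        · refine ⟨l, ?_⟩
          rw [Valuation.map_sub_eq_of_lt_right _ hlt, Valuation.map_mul, hVα, one_mul,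
            Valuation.map_pow, hl, zm0_coe_sq]
        · refine ⟨k, ?_⟩
          rw [Valuation.map_sub_eq_of_lt_left _ hgt, Valuation.map_pow, hk, zm0_coe_sq]

end NoRoot

section PlaceMain

variable {p : ℕ} [Fact p.Prime]

local notation "K" => RatFunc (ZMod p)
local notation "R" => Polynomial (ZMod p)

lemma hilbert_place (hp2 : p % 2 = 1) {q α β : Polynomial (ZMod p)} (hq : Irreducible q)
    (hqn : normalize q = q) (hα : α ≠ 0) (hβ : β ≠ 0) (hcop : IsCoprime α β) (hqβ : q ∣ β) :
    hilbertFin p (placeD q) (algebraMap R K α) (algebraMap R K β)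
      = legSym p α q ^ (normalizedFactors β).count q := by
  rw [placeD_eq hq]
  have hqα : ¬ q ∣ α := fun h =>
    hq.not_isUnit ((hcop.of_isCoprime_of_dvd_right hqβ).isUnit_of_dvd' h dvd_rfl)
  have hqcop : IsCoprime q α := (hq.coprime_iff_not_dvd).mpr hqα
  -- extract the multiplicity
  obtain ⟨e, γ, hγ, hβeq⟩ := WfDvdMonoid.max_power_factor hβ hq
  have hq1 : q ^ e ∣ β := Dvd.intro _ hβeq.symm
  have hq2 : ¬ q ^ (e + 1) ∣ β := by
    rintro ⟨δ, hδ⟩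
    apply hγ
    have hqe0 : q ^ e ≠ 0 := pow_ne_zero _ hq.ne_zero
    refine ⟨δ, mul_left_cancel₀ hqe0 ?_⟩
    have hcomb := hβeq.symm.trans hδ
    rw [pow_succ] at hcomb
    linear_combination hcomb
  have hcount : (normalizedFactors β).count q = e := count_normalizedFactors_eq hq hqn hq1 hq2
  rw [hcount]
  -- notation for images in the completion
  have hVα : Valued.v ((algebraMap K ((placeOf hq).adicCompletion K)) (algebraMap R K α)) = 1 := by
    rw [VL]; exact intVal_eq_one hq hqα
  have hVβ : Valued.v ((algebraMap K ((placeOf hq).adicCompletion K)) (algebraMap R K β)) =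
      ((Multiplicative.ofAdd (-(e : ℤ)) : Multiplicative ℤ) : ℤₘ₀) := by
    rw [VL]; exact intVal_eq_ofAdd hq hβ hq1 hq2
  have h2L : Valued.v (2 : (placeOf hq).adicCompletion K) = 1 := by
    have h2eq : (2 : (placeOf hq).adicCompletion K)
        = algebraMap K ((placeOf hq).adicCompletion K) (algebraMap R K 2) := by
      rw [map_ofNat, map_ofNat]
    rw [h2eq, VL]
    exact intVal_eq_one hq (not_dvd_two hp2 hq)
  have hβK : algebraMap R K β ≠ 0 := fun h =>
    hβ (IsFractionRing.injective R K (by simpa using h))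
  have hβL : (algebraMap K ((placeOf hq).adicCompletion K)) (algebraMap R K β) ≠ 0 :=
    fun h => hβK ((algebraMap K ((placeOf hq).adicCompletion K)).injective (by simpa using h))
  by_cases hsq : ∃ e0 : Polynomial (ZMod p), q ∣ e0 ^ 2 - α
  · -- α is a square mod q : Hilbert symbol is 1
    obtain ⟨e0, he0⟩ := hsq
    have hqe0 : ¬ q ∣ e0 := by
      intro h
      apply hqα
      have hid : α = e0 ^ 2 - (e0 ^ 2 - α) := by ring
      rw [hid]
      exact dvd_sub (dvd_pow h two_ne_zero) he0
    have hc : Valued.v ((algebraMap K ((placeOf hq).adicCompletion K)) (algebraMap R K e0)) = 1 := by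
      rw [VL]; exact intVal_eq_one hq hqe0
    have hw : Valued.v (((algebraMap K ((placeOf hq).adicCompletion K)) (algebraMap R K e0)) ^ 2 -
        (algebraMap K ((placeOf hq).adicCompletion K)) (algebraMap R K α)) < 1 := by
      have himg : ((algebraMap K ((placeOf hq).adicCompletion K)) (algebraMap R K e0)) ^ 2 -
          (algebraMap K ((placeOf hq).adicCompletion K)) (algebraMap R K α)
          = (algebraMap K ((placeOf hq).adicCompletion K)) (algebraMap R K (e0 ^ 2 - α)) := by
        simp only [map_sub, map_pow]
      rw [himg, VL]
      exact (intVal_lt_one_iff hq _).mpr he0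
    obtain ⟨t, ht⟩ := sqrt_exists h2L hc hw
    have hsol : ∃ a b c : (placeOf hq).adicCompletion K, ¬(a = 0 ∧ b = 0 ∧ c = 0) ∧
        c ^ 2 = algebraMap K _ (algebraMap R K α) * a ^ 2
              + algebraMap K _ (algebraMap R K β) * b ^ 2 := by
      refine ⟨1, 0, t, ?_, ?_⟩
      · simp
      · rw [ht]; ring
    rw [show legSym p α q = 1 by
      unfold legSym; rw [if_neg (not_not_intro hqcop), if_pos ⟨e0, he0⟩], one_pow]
    unfold hilbertFin
    exact if_pos hsol
  · have hleg : legSym p α q = -1 := by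
      unfold legSym; rw [if_neg (not_not_intro hqcop), if_neg hsq]
    rcases Nat.even_or_odd e with heven | hodd
    · -- even multiplicity : Hilbert symbol is 1
      obtain ⟨f, hf⟩ := heven
      obtain ⟨c₁, a₁, hrep⟩ := exists_rep hp2 hq hqα γ
      have hBfact : (algebraMap K ((placeOf hq).adicCompletion K)) (algebraMap R K β)
          = ((algebraMap K ((placeOf hq).adicCompletion K)) (algebraMap R K q)) ^ (f + f) *
            (algebraMap K ((placeOf hq).adicCompletion K)) (algebraMap R K γ) := by
        rw [hβeq, hf, map_mul, map_mul, map_pow, map_pow]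
      have hsol : ∃ a b c : (placeOf hq).adicCompletion K, ¬(a = 0 ∧ b = 0 ∧ c = 0) ∧
          c ^ 2 = algebraMap K _ (algebraMap R K α) * a ^ 2
                + algebraMap K _ (algebraMap R K β) * b ^ 2 := by
        by_cases hqc₁ : q ∣ c₁
        · -- c₁ ≡ 0, use the variable a instead
          have hdv : q ∣ α * a₁ ^ 2 + γ := by
            have hid : α * a₁ ^ 2 + γ = c₁ ^ 2 - (c₁ ^ 2 - α * a₁ ^ 2 - γ) := by ring
            rw [hid]
            exact dvd_sub (dvd_pow hqc₁ two_ne_zero) hrep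
          have ha₁ : ¬ q ∣ a₁ := by
            intro h
            apply hγ
            have hid : γ = (α * a₁ ^ 2 + γ) - α * a₁ ^ 2 := by ring
            rw [hid]
            exact dvd_sub hdv ((dvd_pow h two_ne_zero).mul_left α)
          have hαK : algebraMap R K α ≠ 0 := fun h =>
            hα (IsFractionRing.injective R K (by simpa using h))
          have hαL : (algebraMap K ((placeOf hq).adicCompletion K)) (algebraMap R K α) ≠ 0 :=
            fun h => hαK ((algebraMap K ((placeOf hq).adicCompletion K)).injective (by simpa using h))
          have hc₀ : Valued.v ((algebraMap K ((placeOf hq).adicCompletion K))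
              (algebraMap R K a₁)) = 1 := by
            rw [VL]; exact intVal_eq_one hq ha₁
          have hKid : (algebraMap R K a₁) ^ 2 - (- algebraMap R K γ / algebraMap R K α)
              = algebraMap R K (α * a₁ ^ 2 + γ) / algebraMap R K α := by
            rw [map_add, map_mul, map_pow]
            field_simp
            ring
          have hw : Valued.v (((algebraMap K ((placeOf hq).adicCompletion K))
              (algebraMap R K a₁)) ^ 2 - (algebraMap K ((placeOf hq).adicCompletion K))
                (- algebraMap R K γ / algebraMap R K α)) < 1 := by
            have himg : ((algebraMap K ((placeOf hq).adicCompletion K))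
                (algebraMap R K a₁)) ^ 2 - (algebraMap K ((placeOf hq).adicCompletion K))
                  (- algebraMap R K γ / algebraMap R K α)
                = (algebraMap K ((placeOf hq).adicCompletion K))
                    ((algebraMap R K a₁) ^ 2 - (- algebraMap R K γ / algebraMap R K α)) := by
              simp only [map_sub, map_pow]
            rw [himg, hKid, VK, Valuation.map_div, HeightOneSpectrum.valuation_of_algebraMap,
              HeightOneSpectrum.valuation_of_algebraMap, intVal_eq_one hq hqα, div_one]
            exact (intVal_lt_one_iff hq _).mpr hdv
          obtain ⟨t, ht⟩ := sqrt_exists h2L hc₀ hw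
          have htt : (algebraMap K ((placeOf hq).adicCompletion K)) (algebraMap R K α) * t ^ 2
              + (algebraMap K ((placeOf hq).adicCompletion K)) (algebraMap R K γ) = 0 := by
            rw [ht, map_div₀, map_neg]
            field_simp
            ring
          refine ⟨((algebraMap K ((placeOf hq).adicCompletion K)) (algebraMap R K q)) ^ f * t,
            1, 0, ?_, ?_⟩
          · simp
          · rw [hBfact]
            linear_combination (-(((algebraMap K ((placeOf hq).adicCompletion K))
              (algebraMap R K q)) ^ f * ((algebraMap K ((placeOf hq).adicCompletion K))
              (algebraMap R K q)) ^ f)) * htt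
        · -- c₁ a unit mod q
          have hc₀ : Valued.v ((algebraMap K ((placeOf hq).adicCompletion K))
              (algebraMap R K c₁)) = 1 := by
            rw [VL]; exact intVal_eq_one hq hqc₁
          have hw : Valued.v (((algebraMap K ((placeOf hq).adicCompletion K))
              (algebraMap R K c₁)) ^ 2 - (algebraMap K ((placeOf hq).adicCompletion K))
                (algebraMap R K (γ + α * a₁ ^ 2))) < 1 := by
            have himg : ((algebraMap K ((placeOf hq).adicCompletion K))
                (algebraMap R K c₁)) ^ 2 - (algebraMap K ((placeOf hq).adicCompletion K))
                  (algebraMap R K (γ + α * a₁ ^ 2))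
                = (algebraMap K ((placeOf hq).adicCompletion K))
                    (algebraMap R K (c₁ ^ 2 - (γ + α * a₁ ^ 2))) := by
              simp only [map_sub, map_pow]
            rw [himg, VL]
            refine (intVal_lt_one_iff hq _).mpr ?_
            have hid : c₁ ^ 2 - (γ + α * a₁ ^ 2) = c₁ ^ 2 - α * a₁ ^ 2 - γ := by ring
            rw [hid]; exact hrep
          obtain ⟨t, ht⟩ := sqrt_exists h2L hc₀ hw
          have ht' : t ^ 2 = (algebraMap K ((placeOf hq).adicCompletion K)) (algebraMap R K γ)
              + (algebraMap K ((placeOf hq).adicCompletion K)) (algebraMap R K α) *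
                ((algebraMap K ((placeOf hq).adicCompletion K)) (algebraMap R K a₁)) ^ 2 := by
            rw [ht]; simp only [map_add, map_mul, map_pow]
          refine ⟨((algebraMap K ((placeOf hq).adicCompletion K)) (algebraMap R K q)) ^ f *
            (algebraMap K ((placeOf hq).adicCompletion K)) (algebraMap R K a₁), 1,
            ((algebraMap K ((placeOf hq).adicCompletion K)) (algebraMap R K q)) ^ f * t, ?_, ?_⟩
          · simp
          · rw [hBfact]
            linear_combination (((algebraMap K ((placeOf hq).adicCompletion K))
              (algebraMap R K q)) ^ f * ((algebraMap K ((placeOf hq).adicCompletion K))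
              (algebraMap R K q)) ^ f) * ht'
      rw [hleg, Even.neg_one_pow ⟨f, hf⟩]
      unfold hilbertFin
      exact if_pos hsol
    · -- odd multiplicity : no solution
      have hnosol : ¬ ∃ a b c : (placeOf hq).adicCompletion K, ¬(a = 0 ∧ b = 0 ∧ c = 0) ∧
          c ^ 2 = algebraMap K _ (algebraMap R K α) * a ^ 2
                + algebraMap K _ (algebraMap R K β) * b ^ 2 := by
        rintro ⟨a, b, c, hne, heqn⟩
        rcases eq_or_ne b 0 with rfl | hb
        · rcases eq_or_ne a 0 with rfl | ha
          · have hc0 : c = 0 := by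
              have : c ^ 2 = 0 := by rw [heqn]; ring
              exact pow_eq_zero_iff two_ne_zero |>.mp this
            exact hne ⟨rfl, rfl, hc0⟩
          · refine no_root hq hqα hsq (c / a) ?_
            rw [div_pow, heqn]
            field_simp
            ring
        · have hrhs : c ^ 2 - (algebraMap K ((placeOf hq).adicCompletion K))
              (algebraMap R K α) * a ^ 2
              = (algebraMap K ((placeOf hq).adicCompletion K)) (algebraMap R K β) * b ^ 2 := by
            rw [heqn]; ring
          have hLne : c ^ 2 - (algebraMap K ((placeOf hq).adicCompletion K))
              (algebraMap R K α) * a ^ 2 ≠ 0 := by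
            rw [hrhs]
            exact mul_ne_zero hβL (pow_ne_zero _ hb)
          have hca : ¬(c = 0 ∧ a = 0) := by
            rintro ⟨rfl, rfl⟩
            apply hLne
            ring
          obtain ⟨k, hk⟩ := parity_lemma hq hqα hsq c a hca
          have hVb : Valued.v b ≠ 0 := fun h0 => hb ((Valuation.zero_iff _).mp h0)
          obtain ⟨m, hm⟩ := zm0_cases hVb
          have hVrhs : Valued.v ((algebraMap K ((placeOf hq).adicCompletion K))
              (algebraMap R K β) * b ^ 2)
              = ((Multiplicative.ofAdd (-(e : ℤ) + 2 * m) : Multiplicative ℤ) : ℤₘ₀) := by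
            rw [Valuation.map_mul, hVβ, Valuation.map_pow, hm, zm0_coe_sq, ← WithZero.coe_mul,
              WithZero.coe_inj, ← ofAdd_add]
          have hcomb : ((Multiplicative.ofAdd (2 * k) : Multiplicative ℤ) : ℤₘ₀)
              = ((Multiplicative.ofAdd (-(e : ℤ) + 2 * m) : Multiplicative ℤ) : ℤₘ₀) := by
            rw [← hk, hrhs, hVrhs]
          rw [WithZero.coe_inj] at hcomb
          have heq2 : 2 * k = -(e : ℤ) + 2 * m := Multiplicative.ofAdd.injective hcomb
          obtain ⟨j, hj⟩ := hodd
          omega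
      rw [hleg, Odd.neg_one_pow hodd]
      unfold hilbertFin
      exact if_neg hnosol

end PlaceMain

theorem jacobi_eq_prod_hilbert (p : ℕ) [Fact p.Prime] (hp : p % 4 = 1)
    (α β : Polynomial (ZMod p)) (hα : α ≠ 0) (hβ : β ≠ 0) (hcop : IsCoprime α β) :
    jacobiP p α β =
      ∏ᶠ v ∈ {v : HeightOneSpectrum (Polynomial (ZMod p)) | β ∈ v.asIdeal},
        hilbertFin p v (algebraMap (Polynomial (ZMod p)) (RatFunc (ZMod p)) α)
          (algebraMap (Polynomial (ZMod p)) (RatFunc (ZMod p)) β) := by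
  have hp2 : p % 2 = 1 := by omega
  -- identify the support with the image of the normalized factors
  have hset : {v : HeightOneSpectrum (Polynomial (ZMod p)) | β ∈ v.asIdeal}
      = ↑(((normalizedFactors β).toFinset).image placeD) := by
    ext v
    simp only [Set.mem_setOf_eq, Finset.coe_image, Set.mem_image, Finset.mem_coe,
      Multiset.mem_toFinset]
    constructor
    · intro hv
      set g := Submodule.IsPrincipal.generator v.asIdeal with hgdef
      have hgen : Ideal.span {g} = v.asIdeal := Ideal.span_singleton_generator _
      have hg0 : g ≠ 0 := by
        intro h
        apply v.ne_bot
        rw [← hgen, h, Ideal.span_singleton_eq_bot]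
      have hgprime : Prime g := by
        rw [← Ideal.span_singleton_prime hg0, hgen]
        exact v.isPrime
      have hgdvd : g ∣ β := by
        rw [← Ideal.mem_span_singleton, hgen]
        exact hv
      obtain ⟨q, hqmem, hqass⟩ :=
        exists_mem_normalizedFactors_of_dvd hβ hgprime.irreducible hgdvd
      refine ⟨q, hqmem, ?_⟩
      apply HeightOneSpectrum.ext
      rw [placeD_eq (prime_of_normalized_factor q hqmem).irreducible]
      show Ideal.span {q} = v.asIdeal
      rw [← hgen, Ideal.span_singleton_eq_span_singleton]
      exact hqass.symm
    · rintro ⟨q, hqmem, rfl⟩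
      have hirr := (prime_of_normalized_factor q hqmem).irreducible
      rw [placeD_eq hirr]
      show β ∈ Ideal.span {q}
      exact Ideal.mem_span_singleton.mpr (dvd_of_mem_normalizedFactors hqmem)
  rw [hset, finprod_mem_coe_finset]
  have hinj : ∀ x ∈ (normalizedFactors β).toFinset, ∀ y ∈ (normalizedFactors β).toFinset,
      placeD x = placeD y → x = y := by
    intro x hx y hy hxy
    rw [Multiset.mem_toFinset] at hx hy
    have hxirr := (prime_of_normalized_factor x hx).irreducible
    have hyirr := (prime_of_normalized_factor y hy).irreducible
    have : Ideal.span {x} = Ideal.span {y} := by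
      have h1 := placeD_eq (p := p) hxirr
      have h2 := placeD_eq (p := p) hyirr
      rw [h1, h2] at hxy
      exact congrArg HeightOneSpectrum.asIdeal hxy
    exact (Ideal.span_singleton_eq_span_singleton.mp this).eq_of_normalized
      (normalize_normalized_factor x hx) (normalize_normalized_factor y hy)
  rw [Finset.prod_image hinj]
  rw [jacobiP, Finset.prod_multiset_map_count]
  refine Finset.prod_congr rfl fun q hq => ?_
  rw [Multiset.mem_toFinset] at hq
  exact (hilbert_place hp2 (prime_of_normalized_factor q hq).irreducible
    (normalize_normalized_factor q hq) hα hβ hcop (dvd_of_mem_normalizedFactors hq)).symm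
end
end

section
/- For real numbers s, y, θ with s > s₀ > 1/2 and setting y = p^{s−1/2} > 1 and α = e^{iθ} on the unit circle: log(p)·|α^{-1} y / (1 − α^{-1} y)²| ≤ (s − 1/2)^{-1}·Re(1/(1 − α p^{1/2−s})). -/
/- Statement 7: for s > s₀ > 1/2, y = p^{s−1/2} and α = e^{iθ},
   log(p)·|α⁻¹ y/(1 − α⁻¹ y)²| ≤ (s − 1/2)⁻¹ · Re(1/(1 − α p^{1/2−s})). -/

theorem log_deriv_term_bound (p : ℝ) (hp : 1 < p) (θ s s₀ : ℝ)
    (hs₀ : s₀ > 1 / 2) (hs : s > s₀) :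
    Real.log p *
        ‖(Complex.exp (θ * Complex.I))⁻¹ * (p : ℂ) ^ ((s : ℂ) - 1 / 2) /
          (1 - (Complex.exp (θ * Complex.I))⁻¹ * (p : ℂ) ^ ((s : ℂ) - 1 / 2)) ^ 2‖ ≤
      (s - 1 / 2)⁻¹ *
        (1 / (1 - Complex.exp (θ * Complex.I) * (p : ℂ) ^ ((1 / 2 : ℂ) - (s : ℂ)))).re := by
  have hp0 : (0:ℝ) < p := lt_trans one_pos hp
  set t : ℝ := s - 1/2 with ht_def
  have ht : 0 < t := by simp only [ht_def]; linarith
  set y : ℝ := p ^ t with hy_def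
  have hy : 1 < y := (Real.one_lt_rpow_iff_of_pos hp0).mpr (Or.inl ⟨hp, ht⟩)
  have hy0 : 0 < y := lt_trans one_pos hy
  set c := Real.cos θ with hc_def
  set d := Real.sin θ with hd_def
  have hcd : c^2 + d^2 = 1 := by rw [hc_def, hd_def, add_comm]; exact Real.sin_sq_add_cos_sq θ
  have hc1 : c ≤ 1 := Real.cos_le_one θ
  have hα : Complex.exp (θ * Complex.I) = (c:ℂ) + (d:ℂ) * Complex.I := by
    rw [Complex.exp_mul_I, ← Complex.ofReal_cos, ← Complex.ofReal_sin]
  have key : t * Real.log p ≤ y - c := by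
    rw [← Real.log_rpow hp0, ← hy_def]
    have := Real.log_le_sub_one_of_pos hy0
    linarith
  have h1 : (p:ℂ) ^ ((s:ℂ) - 1/2) = (y:ℂ) := by
    have he : ((s:ℂ) - 1/2) = ((t:ℝ):ℂ) := by rw [ht_def]; push_cast; ring
    rw [he, ← Complex.ofReal_cpow hp0.le, ← hy_def]
  have h2 : (p:ℂ) ^ ((1/2:ℂ) - (s:ℂ)) = ((y⁻¹ : ℝ):ℂ) := by
    have he : ((1/2:ℂ) - (s:ℂ)) = (((-t):ℝ):ℂ) := by rw [ht_def]; push_cast; ring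
    rw [he, ← Complex.ofReal_cpow hp0.le, Real.rpow_neg hp0.le, ← hy_def]
  rw [h1, h2, hα]
  clear_value c d y t
  clear hα hy_def hc_def hd_def ht_def hs hs₀ hp
  have hcdC : ((c:ℂ)^2 + (d:ℂ)^2) = 1 := by
    have := congrArg (fun x : ℝ => (x:ℂ)) hcd; push_cast at this; simpa using this
  have hαinv : ((c:ℂ) + (d:ℂ) * Complex.I)⁻¹ = (c:ℂ) - (d:ℂ) * Complex.I :=
    inv_eq_of_mul_eq_one_right (by
      have h : ((c:ℂ) + d * Complex.I) * ((c:ℂ) - d * Complex.I)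
          = (c:ℂ)^2 + (d:ℂ)^2 := by ring_nf; rw [Complex.I_sq]; ring
      rw [h, hcdC])
  rw [hαinv]
  set E : ℝ := y^2 - 2*c*y + 1 with hE_def
  have hE : 0 < E := by nlinarith [sq_nonneg (y - 1)]
  have habs : ‖((c:ℂ) - d * Complex.I) * (y:ℂ) /
      (1 - ((c:ℂ) - d * Complex.I) * (y:ℂ)) ^ 2‖ = y / E := by
    rw [norm_div, norm_mul, norm_pow]
    have hw : ‖(c:ℂ) - d * Complex.I‖ = 1 := by
      rw [Complex.norm_def, Complex.normSq_apply]
      simp only [Complex.sub_re, Complex.sub_im, Complex.ofReal_re, Complex.ofReal_im,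
        Complex.mul_re, Complex.mul_im, Complex.I_re, Complex.I_im]
      rw [show (c - (d * 0 - 0 * 1)) * (c - (d * 0 - 0 * 1)) +
          (0 - (d * 1 + 0 * 0)) * (0 - (d * 1 + 0 * 0)) = c^2 + d^2 by ring, hcd,
        Real.sqrt_one]
    have hden : ‖1 - ((c:ℂ) - d * Complex.I) * (y:ℂ)‖ ^ 2 = E := by
      rw [Complex.sq_norm, Complex.normSq_apply]
      simp only [Complex.sub_re, Complex.sub_im, Complex.one_re, Complex.one_im,
        Complex.ofReal_re, Complex.ofReal_im, Complex.mul_re, Complex.mul_im,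
        Complex.I_re, Complex.I_im, hE_def]
      nlinarith [hcd]
    rw [hw, hden, Complex.norm_of_nonneg hy0.le, one_mul]
  have hre : (1 / (1 - ((c:ℂ) + d * Complex.I) * ((y⁻¹:ℝ):ℂ))).re = y * (y - c) / E := by
    rw [one_div, Complex.inv_re, Complex.normSq_apply]
    simp only [Complex.sub_re, Complex.sub_im, Complex.one_re, Complex.one_im,
      Complex.add_re, Complex.add_im,
      Complex.ofReal_re, Complex.ofReal_im, Complex.mul_re, Complex.mul_im,
      Complex.I_re, Complex.I_im]
    have hyne : y ≠ 0 := ne_of_gt hy0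
    have hEne : E ≠ 0 := ne_of_gt hE
    rw [div_eq_div_iff _ hEne]
    · field_simp
      linear_combination (c - y) * hcd
    · apply ne_of_gt
      have hyi0 : 0 < y⁻¹ := inv_pos.mpr hy0
      have hyi : y⁻¹ < 1 := inv_lt_one_of_one_lt₀ hy
      have h5 : 0 < 1 - c * y⁻¹ := by
        have := mul_le_mul_of_nonneg_right hc1 hyi0.le
        nlinarith
      nlinarith [sq_nonneg (d * y⁻¹), mul_pos h5 h5]
  rw [habs, hre]
  rw [inv_mul_eq_div, le_div_iff₀ ht]
  rw [show Real.log p * (y / E) * t = t * Real.log p * y / E by ring,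
    show y * (y - c) / E = (y - c) * y / E by ring, div_le_div_iff₀ hE hE]
  nlinarith [mul_nonneg (mul_nonneg (sub_nonneg.mpr key) hy0.le) hE.le]
end

section
/- Fix real s with |s| < 1 (here s = Re(α) for α on the unit circle). The function F(x) = x^{-1}·(1 − s e^{−x})/(1 − 2s e^{−x} + e^{−2x}) is strictly decreasing for x > 0. -/
open Real Set

/-- Auxiliary function. -/
noncomputable def Waux (s : ℝ) (x : ℝ) : ℝ :=
  Real.exp (2*x) + 1 + 2*s^2 - 2*x + s*(x-3)*Real.exp x + s*(x-1)*Real.exp (-x)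

lemma Waux_hasDerivAt (s x : ℝ) :
    HasDerivAt (Waux s)
      ((Real.exp x - Real.exp (-x)) * (2*Real.exp x + s*(x-2))) x := by
  have h1 : HasDerivAt (fun y : ℝ => Real.exp (2*y)) (2*Real.exp (2*x)) x := by
    simpa [mul_comm] using ((hasDerivAt_id x).const_mul 2).exp
  have hneg : HasDerivAt (fun y : ℝ => Real.exp (-y)) (-Real.exp (-x)) x := by
    simpa using (hasDerivAt_neg x).exp
  have h2 : HasDerivAt (fun y : ℝ => s*(y-3)*Real.exp y)
      (s*Real.exp x + s*(x-3)*Real.exp x) x := by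
    have : HasDerivAt (fun y : ℝ => s*(y-3)*Real.exp y) _ x := (((hasDerivAt_id x).sub_const 3).const_mul s).mul (Real.hasDerivAt_exp x)
    convert this using 1 <;> simp [id_eq] ; try ring
  have h3 : HasDerivAt (fun y : ℝ => s*(y-1)*Real.exp (-y))
      (s*Real.exp (-x) + s*(x-1)*(-Real.exp (-x))) x := by
    have : HasDerivAt (fun y : ℝ => s*(y-1)*Real.exp (-y)) _ x := (((hasDerivAt_id x).sub_const 1).const_mul s).mul hneg
    convert this using 1 <;> simp [id_eq] ; try ring
  have h4 : HasDerivAt (fun y : ℝ => Real.exp (2*y) + 1 + 2*s^2 - 2*y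
      + s*(y-3)*Real.exp y + s*(y-1)*Real.exp (-y))
      (2*Real.exp (2*x) - 2 + (s*Real.exp x + s*(x-3)*Real.exp x)
        + (s*Real.exp (-x) + s*(x-1)*(-Real.exp (-x)))) x := by
    have h : HasDerivAt (fun y : ℝ => Real.exp (2*y) + 1 + 2*s^2 - 2*y
        + s*(y-3)*Real.exp y + s*(y-1)*Real.exp (-y)) _ x := ((((h1.add_const 1).add_const (2*s^2)).sub ((hasDerivAt_id x).const_mul 2)).add h2).add h3
    convert h using 2 <;> simp [id_eq]
  have hE : Real.exp (2*x) = Real.exp x * Real.exp x := by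
    rw [← Real.exp_add]; ring_nf
  have hEN : Real.exp x * Real.exp (-x) = 1 := by
    rw [← Real.exp_add]; simp
  convert h4 using 1
  · rfl
  rw [hE]; nlinarith [hEN]

lemma Waux_pos (s : ℝ) (hs : |s| < 1) {x : ℝ} (hx : 0 < x) : 0 < Waux s x := by
  obtain ⟨hs1, hs2⟩ := abs_lt.mp hs
  have hmono : StrictMonoOn (Waux s) (Set.Ici (0:ℝ)) := by
    apply strictMonoOn_of_deriv_pos (convex_Ici 0)
    · exact fun y _ => (Waux_hasDerivAt s y).continuousAt.continuousWithinAt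
    · intro y hy
      rw [interior_Ici] at hy
      rw [(Waux_hasDerivAt s y).deriv]
      have hy0 : (0:ℝ) < y := hy
      have h1 : Real.exp (-y) < Real.exp y := Real.exp_lt_exp.mpr (by linarith)
      have h2 : (0:ℝ) < 2*Real.exp y + s*(y-2) := by
        have he : y + 1 ≤ Real.exp y := Real.add_one_le_exp y
        rcases le_total y 2 with h | h
        · nlinarith [mul_nonneg (by linarith : (0:ℝ) ≤ 1+s) (by linarith : (0:ℝ) ≤ 2-y)]
        · nlinarith [mul_nonneg (by linarith : (0:ℝ) ≤ 1+s) (by linarith : (0:ℝ) ≤ y-2)]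
      exact mul_pos (by linarith) h2
  have h0 : Waux s 0 = 2*(1-s)^2 := by
    simp [Waux]; ring
  have := hmono (Set.self_mem_Ici) (Set.mem_Ici.mpr hx.le) hx
  rw [h0] at this
  nlinarith

theorem aux_function_strictAnti (s : ℝ) (hs : |s| < 1) :
    StrictAntiOn
      (fun x : ℝ => x⁻¹ * (1 - s * Real.exp (-x)) /
        (1 - 2 * s * Real.exp (-x) + Real.exp (-2 * x)))
      (Set.Ioi (0 : ℝ)) := by
  obtain ⟨hs1, hs2⟩ := abs_lt.mp hs
  have hBpos : ∀ x : ℝ, 0 < 1 - 2*s*Real.exp (-x) + Real.exp (-2*x) := by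
    intro x
    have hu2 : Real.exp (-2*x) = Real.exp (-x) * Real.exp (-x) := by
      rw [← Real.exp_add]; ring_nf
    nlinarith [sq_nonneg (Real.exp (-x) - s), Real.exp_pos (-x), sq_nonneg s]
  have hder : ∀ x ∈ Set.Ioi (0:ℝ), HasDerivAt
      (fun x : ℝ => x⁻¹ * (1 - s * Real.exp (-x)) /
        (1 - 2 * s * Real.exp (-x) + Real.exp (-2 * x)))
      (((-(x^2)⁻¹ * (1 - s*Real.exp (-x)) + x⁻¹ * (s*Real.exp (-x)))
          * (1 - 2*s*Real.exp (-x) + Real.exp (-2*x))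
        - (x⁻¹ * (1 - s*Real.exp (-x))) * (2*s*Real.exp (-x) - 2*Real.exp (-2*x)))
        / (1 - 2*s*Real.exp (-x) + Real.exp (-2*x))^2) x := by
    intro x hx
    have hx0 : (0:ℝ) < x := hx
    have hneg : HasDerivAt (fun y : ℝ => Real.exp (-y)) (-Real.exp (-x)) x := by
      simpa using (hasDerivAt_neg x).exp
    have hA : HasDerivAt (fun y : ℝ => y⁻¹ * (1 - s*Real.exp (-y)))
        (-(x^2)⁻¹ * (1 - s*Real.exp (-x)) + x⁻¹ * (s*Real.exp (-x))) x := by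
      have : HasDerivAt (fun y : ℝ => y⁻¹ * (1 - s*Real.exp (-y))) _ x := (hasDerivAt_inv hx0.ne').mul ((hasDerivAt_const x 1).sub (hneg.const_mul s))
      convert this using 1; ring
    have hB : HasDerivAt (fun y : ℝ => 1 - 2*s*Real.exp (-y) + Real.exp (-2*y))
        (2*s*Real.exp (-x) - 2*Real.exp (-2*x)) x := by
      have h2 : HasDerivAt (fun y : ℝ => Real.exp (-2*y)) (-2*Real.exp (-2*x)) x := by
        simpa [mul_comm] using ((hasDerivAt_id x).const_mul (-2)).exp
      have : HasDerivAt (fun y : ℝ => 1 - 2*s*Real.exp (-y) + Real.exp (-2*y)) _ x := ((hasDerivAt_const x 1).sub (hneg.const_mul (2*s))).add h2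
      convert this using 1; ring
    exact hA.div hB (hBpos x).ne'
  apply strictAntiOn_of_deriv_neg (convex_Ioi 0)
  · exact fun y hy => (hder y hy).continuousAt.continuousWithinAt
  · intro x hx
    rw [interior_Ioi] at hx
    have hx0 : (0:ℝ) < x := hx
    rw [(hder x hx).deriv]
    apply div_neg_of_neg_of_pos _ (pow_pos (hBpos x) 2)
    -- numerator is negative
    have hW := Waux_pos s hs hx0
    have hkey : (-(x^2)⁻¹ * (1 - s*Real.exp (-x)) + x⁻¹ * (s*Real.exp (-x)))
          * (1 - 2*s*Real.exp (-x) + Real.exp (-2*x))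
        - (x⁻¹ * (1 - s*Real.exp (-x))) * (2*s*Real.exp (-x) - 2*Real.exp (-2*x))
        = -((Real.exp (-x))^2 * Waux s x) / x^2 := by
      have hE : Real.exp (2*x) = Real.exp x ^ 2 := by
        rw [pow_two, ← Real.exp_add]; ring_nf
      have hu2 : Real.exp (-2*x) = ((Real.exp x)^2)⁻¹ := by
        rw [← hE, ← Real.exp_neg]; ring_nf
      rw [Waux, hE, hu2, Real.exp_neg]
      field_simp
      ring
    rw [hkey]
    apply div_neg_of_neg_of_pos _ (by positivity)
    have : (0:ℝ) < (Real.exp (-x))^2 * Waux s x := by positivity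
    linarith
end

section
/- Let F be a family of smooth projective geometrically irreducible curves over F_p with genus tending to infinity. If the gonality satisfies G(X) = o(g(X)) as X ranges over F, then F is a Lindelöf family: max_{|t| = p^{-1/2}} |P(t,X)| = O_ε(p^{ε g(X)}) for every ε > 0. -/
/- Statement 14: a family of curves over 𝔽_p (encoded by genus g j, gonality
G j, unit-circle normalized zeros α j i and point counts N j r related by the
Weil formula, with the gonality bound N j r ≤ G j (p^r + 1)) with genus → ∞ and
G = o(g) is Lindelöf: max_{|t| = p^{-1/2}} |P(t,X_j)| = O_ε(p^{ε g j}). -/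

open Filter Finset

-- shrink lemma
lemma shrink_aux {z : ℂ} (hz : ‖z‖ = 1) {ρ : ℝ} (h0 : 0 < ρ) (h1 : ρ ≤ 1) :
    ‖1 - z‖ ≤ (Real.sqrt ρ)⁻¹ * ‖1 - (ρ:ℂ) * z‖ := by
  have hz1 : z.re ^ 2 + z.im ^ 2 = 1 := by
    have h := Complex.sq_norm z
    rw [hz, Complex.normSq_apply] at h
    nlinarith
  have key : ρ * (‖1 - z‖)^2 ≤ (‖1 - (ρ:ℂ) * z‖)^2 := by
    rw [Complex.sq_norm, Complex.sq_norm, Complex.normSq_apply, Complex.normSq_apply]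
    simp only [Complex.sub_re, Complex.sub_im, Complex.mul_re, Complex.mul_im,
      Complex.ofReal_re, Complex.ofReal_im, Complex.one_re, Complex.one_im]
    nlinarith [sq_nonneg (1 - ρ)]
  have hs0 : (0:ℝ) < Real.sqrt ρ := Real.sqrt_pos.mpr h0
  have step : Real.sqrt ρ * ‖1 - z‖ ≤ ‖1 - (ρ:ℂ) * z‖ := by
    have e1 : Real.sqrt ρ * ‖1 - z‖
        = Real.sqrt (ρ * (‖1 - z‖)^2) := by
      rw [Real.sqrt_mul h0.le, Real.sqrt_sq (norm_nonneg _)]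
    rw [e1]
    calc Real.sqrt (ρ * (‖1 - z‖)^2)
        ≤ Real.sqrt ((‖1 - (ρ:ℂ) * z‖)^2) := Real.sqrt_le_sqrt key
      _ = ‖1 - (ρ:ℂ) * z‖ := Real.sqrt_sq (norm_nonneg _)
  calc ‖1 - z‖ = (Real.sqrt ρ)⁻¹ * (Real.sqrt ρ * ‖1 - z‖) := by
        rw [← mul_assoc, inv_mul_cancel₀ hs0.ne', one_mul]
    _ ≤ (Real.sqrt ρ)⁻¹ * ‖1 - (ρ:ℂ) * z‖ := by
        exact mul_le_mul_of_nonneg_left step (by positivity)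

open Finset

lemma logTaylor_neg_eq (R : ℕ) (w : ℂ) :
    Complex.logTaylor (R + 1) (-w) = -(∑ r ∈ Finset.range (R + 1), w ^ r / (r : ℂ)) := by
  rw [Complex.logTaylor, ← Finset.sum_neg_distrib]
  refine Finset.sum_congr rfl fun j _ => ?_
  have key : ((-1:ℂ)) ^ j * (-1) ^ j = 1 := by rw [← mul_pow]; norm_num
  rw [← neg_div]
  congr 1
  rw [pow_succ, neg_pow w]
  linear_combination (-(w ^ j)) * key

lemma log_factor_bound {w : ℂ} {ρ : ℝ} (hρ : ρ < 1) (hw : ‖w‖ ≤ ρ) (R : ℕ) :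
    ‖1 - w‖ ≤
      Real.exp (ρ ^ (R + 1) / (1 - ρ) + (-(∑ r ∈ Finset.range (R + 1), w ^ r / (r : ℂ))).re) := by
  have hρ0 : 0 ≤ ρ := (norm_nonneg w).trans hw
  have hw' : ‖w‖ ≤ ρ := by exact hw
  have hw1 : ‖w‖ < 1 := lt_of_le_of_lt hw' hρ
  have hne : 1 - w ≠ 0 := by
    intro h
    have : w = 1 := by linear_combination -h
    rw [this] at hw1; simp at hw1
  have habs : ‖1 - w‖ = Real.exp ((Complex.log (1 - w)).re) := by
    rw [← Complex.norm_exp, Complex.exp_log hne]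
  rw [habs, Real.exp_le_exp]
  have hnw : ‖(-w : ℂ)‖ < 1 := by rwa [norm_neg]
  have taylor := Complex.norm_log_sub_logTaylor_le R hnw
  rw [logTaylor_neg_eq] at taylor
  have h1 : (1 : ℂ) + -w = 1 - w := by ring
  rw [h1, norm_neg] at taylor
  have hbound : ‖Complex.log (1 - w) - (-(∑ r ∈ Finset.range (R + 1), w ^ r / (r : ℂ)))‖
      ≤ ρ ^ (R + 1) / (1 - ρ) := by
    refine taylor.trans ?_
    have h2 : ‖w‖ ^ (R + 1) ≤ ρ ^ (R + 1) := pow_le_pow_left₀ (norm_nonneg w) hw' _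
    have h3 : (1 - ‖w‖)⁻¹ ≤ (1 - ρ)⁻¹ := inv_anti₀ (by linarith) (by linarith)
    have hnum : (0:ℝ) ≤ ρ ^ (R + 1) * (1 - ρ)⁻¹ :=
      mul_nonneg (pow_nonneg hρ0 _) (inv_nonneg.mpr (by linarith))
    calc ‖w‖ ^ (R + 1) * (1 - ‖w‖)⁻¹ / (R + 1)
        ≤ ρ ^ (R + 1) * (1 - ρ)⁻¹ / (R + 1) := by
          apply div_le_div_of_nonneg_right ?_ (by positivity)
          exact mul_le_mul h2 h3 (inv_nonneg.mpr (by linarith)) (pow_nonneg hρ0 _)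
      _ ≤ ρ ^ (R + 1) * (1 - ρ)⁻¹ / 1 :=
          div_le_div_of_nonneg_left hnum one_pos (by norm_num)
      _ = ρ ^ (R + 1) / (1 - ρ) := by rw [div_one, div_eq_mul_inv]
  have hre := Complex.re_le_norm
    (Complex.log (1 - w) - (-(∑ r ∈ Finset.range (R + 1), w ^ r / (r : ℂ))))
  rw [Complex.sub_re] at hre
  have habs' : ‖Complex.log (1 - w) - (-(∑ r ∈ Finset.range (R + 1), w ^ r / (r : ℂ)))‖
      ≤ ρ ^ (R + 1) / (1 - ρ) := hbound
  linarith

open Finset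

lemma prod_est (n R : ℕ) {ρ : ℝ} (h0 : 0 < ρ) (h1 : ρ < 1) (z : Fin n → ℂ)
    (hz : ∀ i, ‖z i‖ = 1) (B : ℝ) (hB : 0 ≤ B)
    (hS : ∀ r, 1 ≤ r → r ≤ R → ‖∑ i, z i ^ r‖ ≤ B) :
    ‖∏ i, (1 - z i)‖ ≤
      Real.exp ((n : ℝ) * ((-Real.log ρ) / 2 + ρ ^ (R + 1) / (1 - ρ)) + ((R : ℝ) + 1) * B) := by
  rw [norm_prod]
  have step1 : ∏ i, ‖1 - z i‖
      ≤ ∏ i : Fin n, ((Real.sqrt ρ)⁻¹ * ‖1 - (ρ:ℂ) * z i‖) :=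
    Finset.prod_le_prod (fun i _ => norm_nonneg _)
      (fun i _ => shrink_aux (hz i) h0 h1.le)
  rw [Finset.prod_mul_distrib, Finset.prod_const, Finset.card_univ, Fintype.card_fin] at step1
  -- bound each |1 - ρ z i|
  set T : ℝ := ρ ^ (R + 1) / (1 - ρ) with hT
  have step2 : ∏ i : Fin n, ‖1 - (ρ:ℂ) * z i‖
      ≤ ∏ i : Fin n, Real.exp (T + (-(∑ r ∈ Finset.range (R + 1),
          ((ρ:ℂ) * z i) ^ r / (r : ℂ))).re) := by
    refine Finset.prod_le_prod (fun i _ => norm_nonneg _) (fun i _ => ?_)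
    refine log_factor_bound h1 ?_ R
    rw [norm_mul, Complex.norm_real, Real.norm_eq_abs, hz i, mul_one, abs_of_pos h0]
  rw [← Real.exp_sum] at step2
  -- compute / bound the sum in the exponent
  have hexp : ∑ i : Fin n, (T + (-(∑ r ∈ Finset.range (R + 1),
      ((ρ:ℂ) * z i) ^ r / (r : ℂ))).re) ≤ (n : ℝ) * T + ((R : ℝ) + 1) * B := by
    rw [Finset.sum_add_distrib, Finset.sum_const, Finset.card_univ, Fintype.card_fin,
      nsmul_eq_mul]
    refine (add_le_add_iff_left _).mpr ?_
    set W : ℂ := ∑ i : Fin n, ∑ r ∈ Finset.range (R + 1), ((ρ:ℂ) * z i) ^ r / (r : ℂ) with hW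
    have e1 : ∑ i : Fin n, (-(∑ r ∈ Finset.range (R + 1), ((ρ:ℂ) * z i) ^ r / (r : ℂ))).re
        = (-W).re := by
      rw [hW, ← Complex.re_sum, ← Finset.sum_neg_distrib]
    rw [e1]
    have e2 : (-W).re ≤ ‖W‖ := by
      rw [Complex.neg_re]
      exact (neg_le_abs _).trans (Complex.abs_re_le_norm W)
    refine e2.trans ?_
    have e3 : W = ∑ r ∈ Finset.range (R + 1), ∑ i : Fin n, ((ρ:ℂ) * z i) ^ r / (r : ℂ) :=
      Finset.sum_comm
    rw [e3]
    refine (norm_sum_le _ _).trans ?_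
    have e4 : ∀ r ∈ Finset.range (R + 1),
        ‖∑ i : Fin n, ((ρ:ℂ) * z i) ^ r / (r : ℂ)‖ ≤ B := by
      intro r hr
      rcases Nat.eq_zero_or_pos r with rfl | hr1
      · simp [hB]
      · have e5 : ∑ i : Fin n, ((ρ:ℂ) * z i) ^ r / (r : ℂ)
            = ((ρ:ℂ) ^ r / (r : ℂ)) * ∑ i : Fin n, (z i) ^ r := by
          rw [Finset.mul_sum]
          refine Finset.sum_congr rfl fun i _ => ?_
          rw [mul_pow]; ring
        rw [e5, norm_mul, norm_div, norm_pow, Complex.norm_real, Real.norm_eq_abs, Complex.norm_natCast,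
          abs_of_pos h0]
        have h6 : ρ ^ r / (r : ℝ) ≤ 1 := by
          apply div_le_one_of_le₀ ?_ (Nat.cast_nonneg r)
          calc ρ ^ r ≤ 1 := pow_le_one₀ h0.le h1.le
            _ ≤ (r : ℝ) := by exact_mod_cast hr1
        calc ρ ^ r / (r : ℝ) * ‖∑ i : Fin n, (z i) ^ r‖
            ≤ 1 * B := mul_le_mul h6 (hS r hr1 (Nat.lt_succ_iff.mp (Finset.mem_range.mp hr)))
              (norm_nonneg _) one_pos.le
          _ = B := one_mul B
    refine (Finset.sum_le_sum e4).trans ?_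
    rw [Finset.sum_const, Finset.card_range, nsmul_eq_mul]
    push_cast
    exact le_rfl
  have hsqrt : (Real.sqrt ρ)⁻¹ = Real.exp (-(Real.log ρ) / 2) := by
    rw [neg_div, ← Real.log_sqrt h0.le, Real.exp_neg, Real.exp_log (Real.sqrt_pos.mpr h0)]
  have hpow : ((Real.sqrt ρ)⁻¹) ^ n = Real.exp ((n : ℝ) * (-(Real.log ρ) / 2)) := by
    rw [hsqrt, ← Real.exp_nat_mul]
  calc ∏ i, ‖1 - z i‖
      ≤ ((Real.sqrt ρ)⁻¹) ^ n * ∏ i : Fin n, ‖1 - (ρ:ℂ) * z i‖ := step1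
    _ ≤ ((Real.sqrt ρ)⁻¹) ^ n * Real.exp (∑ i : Fin n, (T + (-(∑ r ∈ Finset.range (R + 1),
          ((ρ:ℂ) * z i) ^ r / (r : ℂ))).re)) := by
        exact mul_le_mul_of_nonneg_left step2 (by positivity)
    _ ≤ ((Real.sqrt ρ)⁻¹) ^ n * Real.exp ((n : ℝ) * T + ((R : ℝ) + 1) * B) := by
        exact mul_le_mul_of_nonneg_left (Real.exp_le_exp.mpr hexp) (by positivity)
    _ = Real.exp ((n : ℝ) * ((-Real.log ρ) / 2 + ρ ^ (R + 1) / (1 - ρ)) + ((R : ℝ) + 1) * B) := by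
        rw [hpow, ← Real.exp_add]
        congr 1
        rw [hT]
        ring

open Finset

open Filter

set_option maxHeartbeats 1000000 in
theorem gonality_o_genus_implies_lindelof (p : ℕ) (hp : p.Prime)
    (g G : ℕ → ℕ) (α : (j : ℕ) → Fin (2 * g j) → ℂ)
    (hα : ∀ j i, ‖α j i‖ = 1)
    -- the numerator has real coefficients (zeros closed under conjugation)
    (hreal : ∀ j (r : ℕ), (∑ i, α j i ^ r).im = 0)
    (N : ℕ → ℕ → ℕ)
    (hcount : ∀ j (r : ℕ), 1 ≤ r →
      (N j r : ℂ) = (p : ℂ) ^ r + 1 - (Real.sqrt p : ℂ) ^ r * ∑ i, α j i ^ r)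
    (hgonality : ∀ j (r : ℕ), 1 ≤ r → (N j r : ℝ) ≤ (G j : ℝ) * ((p : ℝ) ^ r + 1))
    (hgen : Tendsto (fun j => (g j : ℝ)) atTop atTop)
    (hsmall : Tendsto (fun j => (G j : ℝ) / (g j : ℝ)) atTop (nhds 0)) :
    ∀ ε : ℝ, 0 < ε → ∃ C : ℝ, 0 < C ∧ ∀ j, ∀ t : ℂ,
      ‖t‖ = (Real.sqrt p)⁻¹ →
      ‖∏ i, (1 - (Real.sqrt p : ℂ) * α j i * t)‖ ≤
        C * (p : ℝ) ^ (ε * g j) := by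
  have hp2 : (2:ℝ) ≤ (p:ℝ) := by exact_mod_cast hp.two_le
  have hp0 : (0:ℝ) < p := by linarith
  have hsp : 0 < Real.sqrt p := Real.sqrt_pos.mpr hp0
  have hsp1 : (1:ℝ) ≤ Real.sqrt p := by
    rw [show (1:ℝ) = Real.sqrt 1 from Real.sqrt_one.symm]
    exact Real.sqrt_le_sqrt (by linarith)
  have hL : 0 < Real.log p := Real.log_pos (by linarith)
  -- power sum bound from point counts and gonality
  have hSb : ∀ j r, 1 ≤ r → ‖∑ i, α j i ^ r‖
      ≤ 2 * ((G j : ℝ) + 1) * (Real.sqrt p) ^ r := by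
    intro j r hr
    have hc := hcount j r hr
    have heq : (Real.sqrt p : ℂ) ^ r * ∑ i, α j i ^ r
        = (((p:ℝ) ^ r + 1 - (N j r : ℝ) : ℝ) : ℂ) := by
      push_cast
      linear_combination hc
    have habs : (Real.sqrt p) ^ r * ‖∑ i, α j i ^ r‖
        = |(p:ℝ) ^ r + 1 - (N j r : ℝ)| := by
      have h := congrArg (‖·‖) heq
      rwa [norm_mul, norm_pow, Complex.norm_real, Real.norm_eq_abs, abs_of_pos hsp, Complex.norm_real, Real.norm_eq_abs] at h
    have hNnn : (0:ℝ) ≤ (N j r : ℝ) := Nat.cast_nonneg _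
    have hGnn : (0:ℝ) ≤ (G j : ℝ) := Nat.cast_nonneg _
    have hpr1 : (1:ℝ) ≤ (p:ℝ) ^ r := one_le_pow₀ (by linarith)
    have hgon := hgonality j r hr
    have hnum : |(p:ℝ) ^ r + 1 - (N j r : ℝ)| ≤ ((G j : ℝ) + 1) * ((p:ℝ) ^ r + 1) := by
      rw [abs_le]
      constructor
      · nlinarith
      · nlinarith
    have hsq : (Real.sqrt p) ^ r * (Real.sqrt p) ^ r = (p:ℝ) ^ r := by
      rw [← mul_pow, Real.mul_self_sqrt hp0.le]
    have hfin : (Real.sqrt p) ^ r * ‖∑ i, α j i ^ r‖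
        ≤ (Real.sqrt p) ^ r * (2 * ((G j : ℝ) + 1) * (Real.sqrt p) ^ r) := by
      rw [habs]
      nlinarith [pow_pos hsp r]
    exact le_of_mul_le_mul_left hfin (pow_pos hsp r)
  intro ε hε
  set L := Real.log p with hLdef
  have hεL : 0 < ε * L := mul_pos hε hL
  set δ := min (1/2 : ℝ) (ε * L / 8) with hδdef
  have hδ0 : 0 < δ := lt_min (by norm_num) (by positivity)
  have hδh : δ ≤ 1/2 := min_le_left _ _
  have hδε : δ ≤ ε * L / 8 := min_le_right _ _
  set ρ := 1 - δ with hρdef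
  have h0 : 0 < ρ := by rw [hρdef]; linarith
  have h1 : ρ < 1 := by rw [hρdef]; linarith
  obtain ⟨R, hR⟩ := exists_pow_lt_of_lt_one (show (0:ℝ) < δ^2 by positivity) h1
  have hRT : ρ ^ (R+1) / (1 - ρ) ≤ δ := by
    have h2 : ρ ^ (R+1) ≤ δ^2 := by
      have h3 : ρ ^ (R+1) = ρ ^ R * ρ := pow_succ ρ R
      nlinarith [pow_nonneg h0.le R]
    have h4 : (1:ℝ) - ρ = δ := by rw [hρdef]; ring
    rw [h4, div_le_iff₀ hδ0]
    nlinarith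
  have hlog : -Real.log ρ ≤ 2 * δ := by
    have h3 : 1 + 2*δ ≤ Real.exp (2*δ) := by have := Real.add_one_le_exp (2*δ); linarith
    have hexp : Real.exp (-(2*δ)) ≤ ρ := by
      rw [Real.exp_neg]
      have h6 : (Real.exp (2*δ))⁻¹ ≤ 1 - δ := by
        rw [inv_le_iff_one_le_mul₀ (Real.exp_pos _)]
        nlinarith [Real.exp_pos (2*δ)]
      rw [hρdef]; exact h6
    have h7 := (Real.le_log_iff_exp_le h0).mpr hexp
    linarith
  set c := 2 * ((R:ℝ) + 1) * (Real.sqrt p) ^ R with hcdef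
  have hc0 : 0 < c := by positivity
  have hinv : Tendsto (fun j => ((G j : ℝ) + 1) / (g j : ℝ)) atTop (nhds 0) := by
    have h1g : Tendsto (fun j => ((g j : ℝ))⁻¹) atTop (nhds 0) := hgen.inv_tendsto_atTop
    have he : (fun j => ((G j : ℝ) + 1) / (g j : ℝ))
        = fun j => (G j : ℝ) / (g j : ℝ) + ((g j : ℝ))⁻¹ := by
      funext j
      rw [add_div, one_div]
    rw [he]
    simpa using hsmall.add h1g
  have hκ : (0:ℝ) < ε * L / 2 / c := by positivity
  have hev : ∀ᶠ j in atTop, c * ((G j : ℝ) + 1) ≤ ε * L / 2 * (g j : ℝ) := by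
    filter_upwards [hinv.eventually_lt_const hκ, hgen.eventually_ge_atTop 1] with j hj1 hj2
    have hg0 : (0:ℝ) < (g j : ℝ) := by linarith
    rw [div_lt_div_iff₀ hg0 hc0] at hj1
    nlinarith
  obtain ⟨J, hJ⟩ := eventually_atTop.mp hev
  refine ⟨1 + ∑ j ∈ Finset.range J, (2:ℝ) ^ (2 * g j), by positivity, ?_⟩
  intro j t ht
  have hC1 : (1:ℝ) ≤ 1 + ∑ j ∈ Finset.range J, (2:ℝ) ^ (2 * g j) := by
    have : (0:ℝ) ≤ ∑ j ∈ Finset.range J, (2:ℝ) ^ (2 * g j) :=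
      Finset.sum_nonneg fun _ _ => by positivity
    linarith
  have hrp1 : (1:ℝ) ≤ (p:ℝ) ^ (ε * (g j : ℝ)) := by
    have h := Real.rpow_le_rpow_of_exponent_le (by linarith : (1:ℝ) ≤ (p:ℝ))
      (show (0:ℝ) ≤ ε * (g j : ℝ) by positivity)
    rwa [Real.rpow_zero] at h
  by_cases hj : j < J
  · -- small j : trivial bound
    have htriv : ‖∏ i, (1 - (Real.sqrt p : ℂ) * α j i * t)‖ ≤ 2 ^ (2 * g j) := by
      rw [norm_prod]
      calc ∏ i, ‖1 - (Real.sqrt p : ℂ) * α j i * t‖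
          ≤ ∏ _i : Fin (2 * g j), (2:ℝ) := by
            refine Finset.prod_le_prod (fun i _ => norm_nonneg _) (fun i _ => ?_)
            have h8 : ‖(Real.sqrt p : ℂ) * α j i * t‖ = 1 := by
              rw [norm_mul, norm_mul, Complex.norm_real, Real.norm_eq_abs, abs_of_pos hsp, hα, ht, mul_one,
                mul_inv_cancel₀ hsp.ne']
            calc ‖1 - (Real.sqrt p : ℂ) * α j i * t‖
                ≤ ‖(1:ℂ)‖ + ‖(Real.sqrt p : ℂ) * α j i * t‖ := by
                  exact norm_sub_le _ _
              _ = 2 := by rw [norm_one, h8]; norm_num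
        _ = 2 ^ (2 * g j) := by rw [Finset.prod_const, Finset.card_univ, Fintype.card_fin]
    have hmem : (2:ℝ) ^ (2 * g j) ≤ ∑ j' ∈ Finset.range J, (2:ℝ) ^ (2 * g j') :=
      Finset.single_le_sum (f := fun j' => (2:ℝ) ^ (2 * g j'))
        (fun _ _ => by positivity) (Finset.mem_range.mpr hj)
    calc ‖∏ i, (1 - (Real.sqrt p : ℂ) * α j i * t)‖
        ≤ 2 ^ (2 * g j) := htriv
      _ ≤ (1 + ∑ j' ∈ Finset.range J, (2:ℝ) ^ (2 * g j')) * 1 := by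
          rw [mul_one]; linarith
      _ ≤ (1 + ∑ j' ∈ Finset.range J, (2:ℝ) ^ (2 * g j')) * (p:ℝ) ^ (ε * (g j : ℝ)) := by
          exact mul_le_mul_of_nonneg_left hrp1 (by linarith)
  · push_neg at hj
    have hJj := hJ j hj
    have habs1 : ∀ i, ‖(Real.sqrt p : ℂ) * α j i * t‖ = 1 := by
      intro i
      rw [norm_mul, norm_mul, Complex.norm_real, Real.norm_eq_abs, abs_of_pos hsp, hα, ht, mul_one,
        mul_inv_cancel₀ hsp.ne']
    have hSz : ∀ r, 1 ≤ r → r ≤ R →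
        ‖∑ i, ((Real.sqrt p : ℂ) * α j i * t) ^ r‖
          ≤ 2 * ((G j : ℝ) + 1) * (Real.sqrt p) ^ R := by
      intro r hr1 hrR
      have e : ∑ i, ((Real.sqrt p : ℂ) * α j i * t) ^ r
          = ((Real.sqrt p : ℂ) ^ r * t ^ r) * ∑ i, α j i ^ r := by
        rw [Finset.mul_sum]
        refine Finset.sum_congr rfl fun i _ => ?_
        rw [mul_pow, mul_pow]; ring
      rw [e, norm_mul, norm_mul, norm_pow, norm_pow, Complex.norm_real, Real.norm_eq_abs, abs_of_pos hsp, ht]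
      have e2 : Real.sqrt p ^ r * ((Real.sqrt p)⁻¹) ^ r = 1 := by
        rw [← mul_pow, mul_inv_cancel₀ hsp.ne', one_pow]
      rw [e2, one_mul]
      calc ‖∑ i, α j i ^ r‖ ≤ 2 * ((G j : ℝ) + 1) * (Real.sqrt p) ^ r := hSb j r hr1
        _ ≤ 2 * ((G j : ℝ) + 1) * (Real.sqrt p) ^ R := by
            exact mul_le_mul_of_nonneg_left (pow_le_pow_right₀ hsp1 hrR) (by positivity)
    have hmain := prod_est (2 * g j) R h0 h1 (fun i => (Real.sqrt p : ℂ) * α j i * t)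
      habs1 (2 * ((G j : ℝ) + 1) * (Real.sqrt p) ^ R) (by positivity) hSz
    refine hmain.trans ?_
    have hEbound : ((2 * g j : ℕ) : ℝ) * ((-Real.log ρ) / 2 + ρ ^ (R + 1) / (1 - ρ))
        + ((R : ℝ) + 1) * (2 * ((G j : ℝ) + 1) * (Real.sqrt p) ^ R) ≤ ε * L * (g j : ℝ) := by
      have hgnn : (0:ℝ) ≤ (g j : ℝ) := Nat.cast_nonneg _
      have hfac : (-Real.log ρ) / 2 + ρ ^ (R + 1) / (1 - ρ) ≤ 2 * δ := by linarith
      have hfacnn : (0:ℝ) ≤ (-Real.log ρ) / 2 + ρ ^ (R + 1) / (1 - ρ) := by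
        have hl1 : Real.log ρ ≤ 0 := Real.log_nonpos h0.le h1.le
        have hl2 : (0:ℝ) ≤ ρ ^ (R + 1) / (1 - ρ) := by
          apply div_nonneg (pow_nonneg h0.le _)
          linarith
        linarith
      have h9 : ((2 * g j : ℕ) : ℝ) = 2 * (g j : ℝ) := by push_cast; ring
      have h10 : ((R : ℝ) + 1) * (2 * ((G j : ℝ) + 1) * (Real.sqrt p) ^ R)
          = c * ((G j : ℝ) + 1) := by rw [hcdef]; ring
      rw [h9, h10]
      have h11 : 2 * (g j : ℝ) * ((-Real.log ρ) / 2 + ρ ^ (R + 1) / (1 - ρ))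
          ≤ 2 * (g j : ℝ) * (2 * δ) := by
        exact mul_le_mul_of_nonneg_left hfac (by positivity)
      nlinarith
    have hrpow : Real.exp (ε * L * (g j : ℝ)) = (p:ℝ) ^ (ε * (g j : ℝ)) := by
      rw [Real.rpow_def_of_pos hp0]
      congr 1
      rw [hLdef]; ring
    calc Real.exp (((2 * g j : ℕ) : ℝ) * ((-Real.log ρ) / 2 + ρ ^ (R + 1) / (1 - ρ))
          + ((R : ℝ) + 1) * (2 * ((G j : ℝ) + 1) * (Real.sqrt p) ^ R))
        ≤ Real.exp (ε * L * (g j : ℝ)) := Real.exp_le_exp.mpr hEbound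
      _ = (p:ℝ) ^ (ε * (g j : ℝ)) := hrpow
      _ ≤ (1 + ∑ j' ∈ Finset.range J, (2:ℝ) ^ (2 * g j')) * (p:ℝ) ^ (ε * (g j : ℝ)) := by
          exact le_mul_of_one_le_left (by positivity) hC1
end
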